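/- Let S ⊂ ℝ be a set that cannot be covered by finitely many straight-line 'fibers' in the following sense: S = p₁(Γ* ∩ A*) for a full-rank lattice Γ* with p₁, p₂ injective on Γ* and p₂(Γ*) dense in ℝ, where A* contains, for every R > 0, all points (x,y) ∈ ℝ² with |y| ≤ R and |x| sufficiently large. If S were covered by a finite union of arithmetic progressions, then Γ* ∩ A* would be contained in a finite union of lines, forcing p₂(Γ* ∩ A*) to be a discrete closed set; but p₂(Γ* ∩ A*) is dense in ℝ, a contradiction. Conclude: S is not contained in any finite union of arithmetic progressions. -/

import Mathlib

/-- An arithmetic progression (possibly degenerate) is closed. -/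
lemma ap_isClosed (c d : ℝ) : IsClosed {x : ℝ | ∃ k : ℤ, x = c + k * d} := by
  rcases eq_or_ne d 0 with hd | hd
  · have : {x : ℝ | ∃ k : ℤ, x = c + k * d} = {c} := by
      ext x; simp [hd]
    rw [this]; exact isClosed_singleton
  · have : {x : ℝ | ∃ k : ℤ, x = c + k * d} =
        (fun x : ℝ => (x - c) / d) ⁻¹' (Set.range ((↑) : ℤ → ℝ)) := by
      ext x
      constructor
      · rintro ⟨k, rfl⟩; exact ⟨k, by field_simp; ring⟩
      · rintro ⟨k, hk⟩
        simp only at hk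
        refine ⟨k, ?_⟩
        rw [eq_div_iff hd] at hk
        linarith
    rw [this]
    exact Int.isClosedEmbedding_coe_real.isClosed_range.preimage (by fun_prop)

/-- An arithmetic progression has empty interior. -/
lemma ap_interior_empty (c d : ℝ) : interior {x : ℝ | ∃ k : ℤ, x = c + k * d} = ∅ := by
  rcases eq_or_ne d 0 with hd | hd
  · have : {x : ℝ | ∃ k : ℤ, x = c + k * d} = {c} := by
      ext x; simp [hd]
    rw [this, interior_singleton]
  · by_contra h
    rcases Set.nonempty_iff_ne_empty.2 h with ⟨x, hx⟩
    rcases Metric.isOpen_iff.1 isOpen_interior x hx with ⟨ε, hε, hball⟩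
    rcases (interior_subset hx : x ∈ _) with ⟨k, hk⟩
    set ε' := min (ε / 2) (|d| / 2) with hε'
    have hd' : 0 < |d| := abs_pos.2 hd
    have hε'pos : 0 < ε' := lt_min (by linarith) (by linarith)
    have hymem : x + ε' ∈ Metric.ball x ε := by
      simp only [Metric.mem_ball, dist_eq_norm]
      have h2 : ε' ≤ ε / 2 := min_le_left _ _
      rw [show x + ε' - x = ε' by ring, Real.norm_eq_abs, abs_of_pos hε'pos]
      linarith
    rcases (interior_subset (hball hymem) : x + ε' ∈ _) with ⟨k', hk'⟩
    rw [hk] at hk'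
    have hdiff : ((k' : ℝ) - k) * d = ε' := by linear_combination -hk'
    have hkk : k' ≠ k := by
      rintro rfl
      rw [sub_self, zero_mul] at hdiff
      exact absurd hdiff.symm (ne_of_gt hε'pos)
    have h1 : (1 : ℝ) ≤ |(k' : ℝ) - k| := by
      rw [← Int.cast_sub, ← Int.cast_abs]
      exact_mod_cast Int.one_le_abs (sub_ne_zero.2 hkk)
    have h3 : |d| ≤ |((k' : ℝ) - k) * d| := by
      rw [abs_mul]; nlinarith [abs_nonneg d]
    rw [hdiff, abs_of_pos hε'pos] at h3
    have h4 : ε' ≤ |d| / 2 := min_le_right _ _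
    linarith

/-- Let `Γ*` be a full-rank lattice with both coordinate projections
injective on it, let `A* ⊆ ℝ²`, and set `S = p₁(Γ* ∩ A*)`. If `p₂(Γ* ∩ A*)` is dense
in ℝ, then `S` is not contained in any finite union of arithmetic progressions. -/
theorem stmt17 (T : (ℝ × ℝ) ≃ₗ[ℝ] (ℝ × ℝ))
    (Γs : Set (ℝ × ℝ)) (hΓs : Γs = {p | ∃ m n : ℤ, p = T (m, n)})
    (h1 : Set.InjOn Prod.fst Γs) (h2 : Set.InjOn Prod.snd Γs)
    (As : Set (ℝ × ℝ)) (S : Set ℝ) (hS : S = Prod.fst '' (Γs ∩ As))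
    (hdense : Dense (Prod.snd '' (Γs ∩ As))) :
    ¬ ∃ (N : ℕ) (α δ : Fin N → ℝ), (∀ i, δ i ≠ 0) ∧
        S ⊆ ⋃ i, {x : ℝ | ∃ k : ℤ, x = α i + k * δ i} := by
  rintro ⟨N, α, δ, hδ, hcov⟩
  set a := (T (1, 0)).1 with ha
  set b := (T (1, 0)).2 with hb
  set c := (T (0, 1)).1 with hc
  set d := (T (0, 1)).2 with hd
  -- computation of T on lattice points
  have hT : ∀ m n : ℤ, T ((m : ℝ), (n : ℝ)) = (m * a + n * c, m * b + n * d) := by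
    intro m n
    have h5 : ((m : ℝ), (n : ℝ)) = (m : ℝ) • ((1:ℝ), (0:ℝ)) + (n : ℝ) • ((0:ℝ), (1:ℝ)) := by
      simp [Prod.ext_iff]
    rw [h5, map_add, map_smul, map_smul]
    simp [Prod.ext_iff, ha, hb, hc, hd, mul_comm]
  -- nondegeneracy from injectivity of fst on Γs
  have nondeg : ∀ p q : ℤ, (p : ℝ) * a + q * c = 0 → p = 0 ∧ q = 0 := by
    intro p q hpq
    have hm1 : T ((p:ℝ), (q:ℝ)) ∈ Γs := by rw [hΓs]; exact ⟨p, q, rfl⟩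
    have hz : T ((0:ℝ), (0:ℝ)) = ((0:ℝ), (0:ℝ)) := by
      have h6 : ((0:ℝ), (0:ℝ)) = (0 : ℝ × ℝ) := rfl
      rw [h6, map_zero]
    have hm2 : ((0:ℝ), (0:ℝ)) ∈ Γs := by
      rw [hΓs]; exact ⟨0, 0, by push_cast; exact hz.symm⟩
    have hfst : (T ((p:ℝ), (q:ℝ))).1 = (((0:ℝ), (0:ℝ)) : ℝ × ℝ).1 := by
      rw [hT p q]; simpa using hpq
    have heq : T ((p:ℝ), (q:ℝ)) = ((0:ℝ), (0:ℝ)) := h1 hm1 hm2 hfst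
    have heq2 : ((p:ℝ), (q:ℝ)) = ((0:ℝ), (0:ℝ)) := T.injective (by rw [heq, hz])
    have hp : (p : ℝ) = 0 := congrArg Prod.fst heq2
    have hq : (q : ℝ) = 0 := congrArg Prod.snd heq2
    exact ⟨by exact_mod_cast hp, by exact_mod_cast hq⟩
  -- pairwise dependence of difference vectors
  have dep : ∀ (i : Fin N) (u v : ℤ × ℤ) (k l : ℤ),
      (u.1 : ℝ) * a + u.2 * c = δ i * k → (v.1 : ℝ) * a + v.2 * c = δ i * l →
      u.1 * v.2 = u.2 * v.1 := by
    intro i u v k l hu hv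
    by_contra hD
    set D : ℤ := u.1 * v.2 - u.2 * v.1 with hDdef
    have hDne : D ≠ 0 := sub_ne_zero.2 hD
    have hDR : (D : ℝ) ≠ 0 := Int.cast_ne_zero.2 hDne
    set k₁ : ℤ := v.2 * k - u.2 * l with hk₁
    set k₂ : ℤ := u.1 * l - v.1 * k with hk₂
    have hDa : (D : ℝ) * a = δ i * k₁ := by
      push_cast [hDdef, hk₁]
      linear_combination (v.2 : ℝ) * hu - (u.2 : ℝ) * hv
    have hDc : (D : ℝ) * c = δ i * k₂ := by
      push_cast [hDdef, hk₂]
      linear_combination (u.1 : ℝ) * hv - (v.1 : ℝ) * hu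
    have hzero : ((k₂ : ℤ) : ℝ) * a + ((-k₁ : ℤ) : ℝ) * c = 0 := by
      have h3 : (D : ℝ) * ((k₂ : ℝ) * a + ((-k₁ : ℤ) : ℝ) * c) = 0 := by
        push_cast
        linear_combination (k₂ : ℝ) * hDa - (k₁ : ℝ) * hDc
      rcases mul_eq_zero.1 h3 with h | h
      · exact absurd h hDR
      · exact h
    obtain ⟨hk₂0, hk₁0'⟩ := nondeg k₂ (-k₁) hzero
    have hk₁0 : k₁ = 0 := by omega
    have ha0 : a = 0 := by
      rw [hk₁0] at hDa
      have h5 : (D : ℝ) * a = 0 := by simpa using hDa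
      rcases mul_eq_zero.1 h5 with h | h
      · exact absurd h hDR
      · exact h
    have hc0 : c = 0 := by
      rw [hk₂0] at hDc
      have h5 : (D : ℝ) * c = 0 := by simpa using hDc
      rcases mul_eq_zero.1 h5 with h | h
      · exact absurd h hDR
      · exact h
    have := nondeg 1 0 (by rw [ha0, hc0]; ring)
    exact one_ne_zero this.1
  -- the fibers
  set Y : Fin N → Set ℝ := fun i =>
    Prod.snd '' (Γs ∩ As ∩ Prod.fst ⁻¹' {x : ℝ | ∃ k : ℤ, x = α i + k * δ i}) with hY
  -- each fiber is contained in an arithmetic progression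
  have hfib : ∀ i, ∃ c₀ d₀ : ℝ, Y i ⊆ {x : ℝ | ∃ k : ℤ, x = c₀ + k * d₀} := by
    intro i
    rcases Set.eq_empty_or_nonempty (Y i) with hE | ⟨y₀, hy₀⟩
    · exact ⟨0, 0, by rw [hE]; exact Set.empty_subset _⟩
    rcases hy₀ with ⟨w, ⟨⟨hwΓ, _⟩, hwP⟩, hwy⟩
    rw [hΓs] at hwΓ
    rcases hwΓ with ⟨m₀, n₀, hw⟩
    rcases hwP with ⟨k₀, hk₀⟩
    have e0a : w.1 = m₀ * a + n₀ * c := by rw [hw, hT m₀ n₀]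
    have e0b : w.2 = m₀ * b + n₀ * d := by rw [hw, hT m₀ n₀]
    rw [e0a] at hk₀
    by_cases hsing : Y i ⊆ {w.2}
    · exact ⟨w.2, 0, fun y hy => ⟨0, by rcases hsing hy with rfl; simp⟩⟩
    -- get a nonzero difference vector (mu, nu)
    rcases Set.not_subset.1 hsing with ⟨y₁, hy₁, hy₁ne⟩
    rcases hy₁ with ⟨γ₁, ⟨⟨hγ₁Γ, _⟩, hγ₁P⟩, hγ₁y⟩
    rw [hΓs] at hγ₁Γ
    rcases hγ₁Γ with ⟨m₁, n₁, hγ₁⟩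
    rcases hγ₁P with ⟨k₁', hk₁'⟩
    have e1a : γ₁.1 = m₁ * a + n₁ * c := by rw [hγ₁, hT m₁ n₁]
    rw [e1a] at hk₁'
    have hu_rel : ((m₁ - m₀ : ℤ) : ℝ) * a + ((n₁ - n₀ : ℤ) : ℝ) * c
        = δ i * ((k₁' - k₀ : ℤ) : ℝ) := by
      push_cast
      linear_combination hk₁' - hk₀
    have hune : ¬(m₁ - m₀ = 0 ∧ n₁ - n₀ = 0) := by
      rintro ⟨hm, hn⟩
      apply hy₁ne
      have hm' : m₁ = m₀ := by omega
      have hn' : n₁ = n₀ := by omega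
      simp only [Set.mem_singleton_iff]
      rw [← hγ₁y, hγ₁, hw, hm', hn']
    rcases eq_or_ne (m₁ - m₀) 0 with hmu | hmu
    · -- first component of u vanishes, second doesn't
      have hnu : n₁ - n₀ ≠ 0 := fun h => hune ⟨hmu, h⟩
      refine ⟨w.2, d, ?_⟩
      rintro y ⟨γ, ⟨⟨hγΓ, _⟩, hγP⟩, rfl⟩
      rw [hΓs] at hγΓ
      rcases hγΓ with ⟨m, n, hγ⟩
      rcases hγP with ⟨k', hk'⟩
      have e2a : γ.1 = m * a + n * c := by rw [hγ, hT m n]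
      have e2b : γ.2 = m * b + n * d := by rw [hγ, hT m n]
      rw [e2a] at hk'
      have hv_rel : ((m - m₀ : ℤ) : ℝ) * a + ((n - n₀ : ℤ) : ℝ) * c
          = δ i * ((k' - k₀ : ℤ) : ℝ) := by
        push_cast
        linear_combination hk' - hk₀
      have hdep : (m₁ - m₀) * (n - n₀) = (n₁ - n₀) * (m - m₀) :=
        dep i (m₁ - m₀, n₁ - n₀) (m - m₀, n - n₀) _ _ hu_rel hv_rel
      rw [hmu, zero_mul] at hdep
      have hmm : m = m₀ := by
        rcases mul_eq_zero.1 hdep.symm with h | h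
        · exact absurd h hnu
        · omega
      refine ⟨n - n₀, ?_⟩
      rw [e2b, e0b, hmm]
      push_cast
      ring
    · -- first component of u nonzero
      have hmuR : ((m₁ : ℝ) - m₀) ≠ 0 := by
        have h8 : ((m₁ - m₀ : ℤ) : ℝ) ≠ 0 := Int.cast_ne_zero.2 hmu
        push_cast at h8
        exact h8
      refine ⟨w.2, (((m₁ - m₀ : ℤ) : ℝ) * b + ((n₁ - n₀ : ℤ) : ℝ) * d) / ((m₁ - m₀ : ℤ) : ℝ), ?_⟩
      rintro y ⟨γ, ⟨⟨hγΓ, _⟩, hγP⟩, rfl⟩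
      rw [hΓs] at hγΓ
      rcases hγΓ with ⟨m, n, hγ⟩
      rcases hγP with ⟨k', hk'⟩
      have e2a : γ.1 = m * a + n * c := by rw [hγ, hT m n]
      have e2b : γ.2 = m * b + n * d := by rw [hγ, hT m n]
      rw [e2a] at hk'
      have hv_rel : ((m - m₀ : ℤ) : ℝ) * a + ((n - n₀ : ℤ) : ℝ) * c
          = δ i * ((k' - k₀ : ℤ) : ℝ) := by
        push_cast
        linear_combination hk' - hk₀
      have hdep : (m₁ - m₀) * (n - n₀) = (n₁ - n₀) * (m - m₀) :=
        dep i (m₁ - m₀, n₁ - n₀) (m - m₀, n - n₀) _ _ hu_rel hv_rel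
      have hdepR : ((m₁ : ℝ) - m₀) * ((n : ℝ) - n₀) = ((n₁ : ℝ) - n₀) * ((m : ℝ) - m₀) := by
        exact_mod_cast hdep
      refine ⟨m - m₀, ?_⟩
      have h6 : ((m : ℝ) - m₀) *
          ((((m₁ : ℝ) - m₀) * b + ((n₁ : ℝ) - n₀) * d) / ((m₁ : ℝ) - m₀))
          = ((m : ℝ) - m₀) * b + ((n : ℝ) - n₀) * d := by
        rw [← mul_div_assoc, div_eq_iff hmuR]
        linear_combination (-d) * hdepR
      rw [e2b, e0b]
      push_cast
      linarith [h6]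
  -- Baire category argument
  choose c₀ d₀ hsub using hfib
  have hcover : Prod.snd '' (Γs ∩ As) ⊆ ⋃ i, Y i := by
    rintro y ⟨γ, hγ, rfl⟩
    have hmem : γ.1 ∈ S := by rw [hS]; exact ⟨γ, hγ, rfl⟩
    rcases Set.mem_iUnion.1 (hcov hmem) with ⟨i, hi⟩
    exact Set.mem_iUnion.2 ⟨i, ⟨γ, ⟨hγ, hi⟩, rfl⟩⟩
  set C : Fin N → Set ℝ := fun i => {x : ℝ | ∃ k : ℤ, x = c₀ i + k * d₀ i} with hC
  have hCclosed : ∀ i, IsClosed (C i) := fun i => ap_isClosed _ _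
  have huniv : ⋃ i, C i = Set.univ := by
    apply Set.eq_univ_of_univ_subset
    have h4 : closure (⋃ i, Y i) = Set.univ := (hdense.mono hcover).closure_eq
    rw [← h4]
    exact closure_minimal (Set.iUnion_mono hsub) (isClosed_iUnion_of_finite hCclosed)
  rcases nonempty_interior_of_iUnion_of_closed hCclosed huniv with ⟨i, hi⟩
  rw [hC] at hi
  simp only [ap_interior_empty] at hi
  exact Set.not_nonempty_empty hi
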